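/- Let q ∈ ℂ with |q| < 1 and let n ≥ 1 be an integer. The series Σ_{m=1}^{∞} (−1)^m q^m m^n converges absolutely and [2]_q·Σ_{m=1}^{∞} (−1)^m q^m m^n = E_{n,q}. (This is the identity ζ_{q,E}(−n) = E_{n,q} for ζ_{q,E}(s) = [2]_q·Σ_{m=1}^{∞} (−1)^m q^m m^{−s}.) -/

import Mathlib

open Finset

/-- For `q ∈ ℂ` with `|q| < 1` and an integer `n ≥ 1`, the series
`∑_{m≥1} (-1)^m q^m m^n` converges absolutely and
`[2]_q ∑_{m≥1} (-1)^m q^m m^n = E_{n,q}`, i.e. `ζ_{q,E}(-n) = E_{n,q}`. -/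
theorem q_euler_zeta_numbers_at_neg_integers (q : ℂ) (hq : ‖q‖ < 1)
    (E : ℕ → ℂ) (hE0 : E 0 = 1)
    (hE : ∀ m : ℕ, 1 ≤ m →
      q * ∑ k ∈ range (m + 1), (m.choose k : ℂ) * E k + E m = 0)
    (n : ℕ) (hn : 1 ≤ n) :
    Summable (fun m : ℕ => ‖(-1 : ℂ) ^ (m + 1) * q ^ (m + 1) * ((m : ℂ) + 1) ^ n‖) ∧
    (1 + q) * ∑' m : ℕ, (-1 : ℂ) ^ (m + 1) * q ^ (m + 1) * ((m : ℂ) + 1) ^ n = E n := by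
  have hq1 : (1 : ℂ) + q ≠ 0 := by
    intro h
    have hq' : q = -1 := by linear_combination h
    rw [hq'] at hq; simp at hq
  -- summability
  have hsum : ∀ k, Summable
      (fun m : ℕ => ‖(-1 : ℂ) ^ (m + 1) * q ^ (m + 1) * ((m : ℂ) + 1) ^ k‖) := by
    intro k
    have h1 : Summable (fun m : ℕ => (m:ℝ)^k * ‖q‖^m) :=
      summable_pow_mul_geometric_of_norm_lt_one k (by simpa using hq)
    have h2 := (summable_nat_add_iff 1).mpr h1
    apply h2.congr
    intro m
    push_cast
    simp [norm_mul, norm_pow, abs_of_nonneg]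
    have : ‖(m:ℂ)+1‖ = (m:ℝ)+1 := by
      rw [show ((m:ℂ)+1) = ((m+1:ℕ):ℂ) by push_cast; ring, Complex.norm_natCast]
      push_cast; ring
    rw [this]; ring
  have hsa : ∀ k, Summable
      (fun m : ℕ => (-1 : ℂ) ^ (m + 1) * q ^ (m + 1) * ((m : ℂ) + 1) ^ k) :=
    fun k => (hsum k).of_norm
  set S : ℕ → ℂ := fun k => ∑' m : ℕ, (-1 : ℂ) ^ (m + 1) * q ^ (m + 1) * ((m : ℂ) + 1) ^ k
    with hSdef
  -- value of S 0
  have hS0 : (1 + q) * S 0 = -q := by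
    have h1 : S 0 = ∑' m : ℕ, (-q) * (-q)^m := by
      apply tsum_congr; intro m; ring
    rw [h1, tsum_mul_left, tsum_geometric_of_norm_lt_one (by simpa using hq)]
    rw [sub_neg_eq_add, mul_comm, mul_assoc, inv_mul_cancel₀ hq1]
    ring
  -- the key shift identity
  have hshift : ∀ k : ℕ,
      q * (∑ j ∈ range (k+1), (k.choose j : ℂ) * S j) = -(S k + q) := by
    intro k
    have hT : ∑ j ∈ range (k+1), (k.choose j : ℂ) * S j
        = ∑' m : ℕ, (-1 : ℂ)^(m+1) * q^(m+1) * ((m:ℂ)+2)^k := by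
      simp only [hSdef, ← tsum_mul_left]
      rw [← Summable.tsum_finsetSum (fun j _ => ((hsa j).mul_left _))]
      apply tsum_congr
      intro m
      have hb : ((m:ℂ)+2)^k = ∑ j ∈ range (k+1), ((m:ℂ)+1)^j * 1^(k-j) * (k.choose j : ℂ) := by
        rw [show ((m:ℂ)+2) = ((m:ℂ)+1) + 1 by ring, add_pow]
      rw [hb, Finset.mul_sum]
      apply Finset.sum_congr rfl
      intro j _
      ring
    have hsplit : S k = -q + (-q) * (∑' m : ℕ, (-1 : ℂ)^(m+1) * q^(m+1) * ((m:ℂ)+2)^k) := by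
      simp only [hSdef]
      rw [Summable.tsum_eq_zero_add (hsa k)]
      congr 1
      · push_cast; ring
      · rw [← tsum_mul_left]
        apply tsum_congr
        intro m
        push_cast
        ring
    rw [hT]
    linear_combination hsplit
  -- the comparison sequence
  set F : ℕ → ℂ := fun k => (1+q) * S k + (if k = 0 then (1+q) else 0) with hFdef
  have hF0 : F 0 = 1 := by
    have h : F 0 = (1+q) * S 0 + (1+q) := by simp [hFdef]
    rw [h]; linear_combination hS0
  have hFrec : ∀ m : ℕ, 1 ≤ m →
      q * ∑ k ∈ range (m + 1), (m.choose k : ℂ) * F k + F m = 0 := by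
    intro m hm
    have hm0 : m ≠ 0 := by omega
    have h1 : ∑ k ∈ range (m+1), (m.choose k : ℂ) * F k
        = (1+q) * (∑ k ∈ range (m+1), (m.choose k : ℂ) * S k) + (1+q) := by
      rw [hFdef]
      simp only [mul_add, Finset.sum_add_distrib, Finset.mul_sum]
      congr 1
      · apply Finset.sum_congr rfl; intro j _; ring
      · simp only [mul_ite, mul_zero, Finset.sum_ite_eq', Finset.mem_range]
        simp
    have h2 : F m = (1+q) * S m := by
      rw [hFdef]; simp [hm0]
    rw [h1, h2]
    have := hshift m
    linear_combination (1+q) * this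
  -- uniqueness: E = F
  have hEF : ∀ m : ℕ, E m = F m := by
    intro m
    induction m using Nat.strong_induction_on with
    | _ m ih =>
      match m with
      | 0 => rw [hE0, hF0]
      | (m+1) =>
        have h1 := hE (m+1) (by omega)
        have h2 := hFrec (m+1) (by omega)
        rw [Finset.sum_range_succ] at h1 h2
        simp only [Nat.choose_self, Nat.cast_one, one_mul] at h1 h2
        have hA : ∑ k ∈ range (m+1), ((m+1).choose k : ℂ) * E k
            = ∑ k ∈ range (m+1), ((m+1).choose k : ℂ) * F k := by
          apply Finset.sum_congr rfl
          intro k hk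
          rw [ih k (by simp at hk; omega)]
        rw [hA] at h1
        apply mul_left_cancel₀ hq1
        linear_combination h1 - h2
  constructor
  · exact hsum n
  · have hn0 : n ≠ 0 := by omega
    rw [hEF n, hFdef]
    simp [hn0, hSdef]
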